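/- Let r ≥ 2 be an integer, and let n ≥ 0 and p, q be integers. Then C(np, nq) = T_n(C(p,q)), where T_n is the normalized Chebyshev polynomial of the first kind of degree n evaluated on the matrix C(p,q). -/

import Mathlib

open Complex Matrix

/-- `t = exp(iπ/(2r))`. -/
noncomputable def tconst (r : ℕ) : ℂ := Complex.exp (Real.pi * Complex.I / (2 * r))

/-- `ε(k,j) = 1` if `j ≡ k (mod 2r)`, `−1` if `j ≡ −k (mod 2r)`, `0` otherwise. -/
def eps (r : ℕ) (k j : ℤ) : ℤ :=
  if (2 * (r : ℤ)) ∣ (j - k) then 1 else if (2 * (r : ℤ)) ∣ (j + k) then -1 else 0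

/-- The matrix of the Weyl quantization of `2 cos 2π(px+qy)` in the basis `ζ_1, …, ζ_{r−1}`:
`C(p,q)_{k,m} = t^{−pq} (t^{2qm} ε(k, m−p) + t^{−2qm} ε(k, m+p))`, with indices shifted so that
the index `k : Fin (r-1)` corresponds to `k+1 ∈ {1, …, r−1}`. -/
noncomputable def Cmat (r : ℕ) (p q : ℤ) : Matrix (Fin (r - 1)) (Fin (r - 1)) ℂ :=
  Matrix.of fun k m =>
    tconst r ^ (-(p * q)) *
      (tconst r ^ (2 * q * ((m : ℤ) + 1)) * (eps r ((k : ℤ) + 1) (((m : ℤ) + 1) - p) : ℂ) +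
       tconst r ^ (-(2 * q * ((m : ℤ) + 1))) * (eps r ((k : ℤ) + 1) (((m : ℤ) + 1) + p) : ℂ))

/-- The quantized integer `[n] = sin(nπ/r)/sin(π/r)`. -/
noncomputable def qint (r : ℕ) (n : ℤ) : ℝ :=
  Real.sin (n * Real.pi / r) / Real.sin (Real.pi / r)

/-- Normalized Chebyshev polynomials of the first kind: `T_0 = 2`, `T_1 = X`,
`T_{n+1} = X·T_n − T_{n−1}`. -/
noncomputable def chebT : ℕ → Polynomial ℂ
  | 0 => 2
  | 1 => Polynomial.X
  | (n + 2) => Polynomial.X * chebT (n + 1) - chebT n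


lemma t_ne_zero (r : ℕ) : tconst r ≠ 0 := Complex.exp_ne_zero _

lemma t_zpow (r : ℕ) (a : ℤ) :
    tconst r ^ a = Complex.exp (a * (Real.pi * Complex.I / (2 * r))) := by
  rw [tconst, ← Complex.exp_int_mul]

lemma t_four_r (r : ℕ) (hr : 2 ≤ r) : tconst r ^ ((4 * r : ℤ)) = 1 := by
  rw [t_zpow]
  have hr0 : (r : ℂ) ≠ 0 := by
    exact_mod_cast Nat.cast_ne_zero.mpr (by omega)
  have : ((4 * r : ℤ) : ℂ) * (Real.pi * Complex.I / (2 * r)) = 2 * Real.pi * Complex.I := by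
    push_cast
    field_simp
    ring
  rw [this, Complex.exp_two_pi_mul_I]

lemma t_zpow_eq (r : ℕ) (hr : 2 ≤ r) {a b : ℤ} (h : (4 * (r : ℤ)) ∣ (a - b)) :
    tconst r ^ a = tconst r ^ b := by
  obtain ⟨k, hk⟩ := h
  have ha : a = b + 4 * r * k := by linarith
  subst ha
  rw [zpow_add₀ (t_ne_zero r), zpow_mul (tconst r) (4*r) k, t_four_r r hr, _root_.one_zpow, mul_one]

lemma zmod_cast_eq_iff (r : ℕ) [NeZero r] (a b : ℤ) :
    ((a : ZMod (2*r)) = (b : ZMod (2*r))) ↔ (2*(r:ℤ)) ∣ (b - a) := by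
  rw [ZMod.intCast_eq_intCast_iff, Int.modEq_iff_dvd]
  push_cast
  tauto

lemma zmod_val_dvd (r : ℕ) [NeZero r] (a : ℤ) :
    (2*(r:ℤ)) ∣ ((((a : ZMod (2*r)).val : ℤ)) - a) := by
  rw [← zmod_cast_eq_iff r]
  push_cast
  simp [ZMod.natCast_val, ZMod.cast_id]

/-- if `a ≡ b mod 2r` then `t^(2ca) = t^(2cb)` -/
lemma t_zpow_mul_congr (r : ℕ) (hr : 2 ≤ r) (c : ℤ) {a b : ℤ} (h : (2*(r:ℤ)) ∣ (a - b)) :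
    tconst r ^ (2 * c * a) = tconst r ^ (2 * c * b) := by
  apply t_zpow_eq r hr
  obtain ⟨k, hk⟩ := h
  exact ⟨c * k, by linear_combination 2 * c * hk⟩

/-- Weyl operator matrix over `ZMod (2r)`. -/
noncomputable def Dmat (r : ℕ) (p q : ℤ) : Matrix (ZMod (2*r)) (ZMod (2*r)) ℂ :=
  Matrix.of fun x y =>
    if y = x + (p : ZMod (2*r)) then
      tconst r ^ (-(p * q)) * tconst r ^ (2 * q * ((y.val : ℤ))) else 0

lemma Dmul (r : ℕ) (hr : 2 ≤ r) [NeZero r] (p q p' q' : ℤ) :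
    Dmat r p q * Dmat r p' q' =
      tconst r ^ (p * q' - p' * q) • Dmat r (p + p') (q + q') := by
  haveI : NeZero (2*r) := ⟨by omega⟩
  ext x z
  rw [Matrix.mul_apply]
  simp only [Dmat, Matrix.of_apply, Matrix.smul_apply, smul_eq_mul, ite_mul, zero_mul]
  rw [Finset.sum_ite_eq' Finset.univ (x + (p : ZMod (2*r)))]
  simp only [Finset.mem_univ, if_true]
  by_cases hz : z = x + (p : ZMod (2*r)) + (p' : ZMod (2*r))
  · have hz' : z = x + ((p + p' : ℤ) : ZMod (2*r)) := by push_cast; rw [hz]; ring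
    rw [if_pos hz, if_pos hz']
    -- now pure power identity, using (x+p) = z - p'
    have hxp : x + (p : ZMod (2*r)) = ((((z.val : ℤ)) - p' : ℤ) : ZMod (2*r)) := by
      push_cast
      simp only [ZMod.natCast_val, ZMod.intCast_cast, ZMod.cast_id]
      rw [hz]; ring
    have hv : (2*(r:ℤ)) ∣ (((x + (p : ZMod (2*r))).val : ℤ) - ((z.val : ℤ) - p')) := by
      have := zmod_val_dvd r ((z.val : ℤ) - p')
      rw [← hxp] at this
      exact this
    rw [t_zpow_mul_congr r hr q hv]
    simp only [← zpow_add₀ (t_ne_zero r)]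
    apply t_zpow_eq r hr
    ring_nf
    exact ⟨0, by ring⟩
  · rw [if_neg hz, if_neg (fun h => hz (by push_cast at h; rw [h]; ring))]
    simp

noncomputable def Fmat (r : ℕ) (p q : ℤ) : Matrix (ZMod (2*r)) (ZMod (2*r)) ℂ :=
  Dmat r p q + Dmat r (-p) (-q)

noncomputable def Emat (r : ℕ) (p q : ℤ) : Matrix (ZMod (2*r)) (ZMod (2*r)) ℂ :=
  Matrix.of fun x y => Fmat r p q x y - Fmat r p q (-x) y

lemma Dmat_apply_cast (r : ℕ) (hr : 2 ≤ r) [NeZero r] (p q a b : ℤ) :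
    Dmat r p q ((a : ZMod (2*r))) ((b : ZMod (2*r))) =
      if (2*(r:ℤ)) ∣ (b - a - p) then tconst r ^ (-(p*q)) * tconst r ^ (2*q*b) else 0 := by
  haveI : NeZero (2*r) := ⟨by omega⟩
  simp only [Dmat, Matrix.of_apply]
  have hcond : ((b : ZMod (2*r)) = (a : ZMod (2*r)) + (p : ZMod (2*r)))
      ↔ (2*(r:ℤ)) ∣ (b - a - p) := by
    rw [show (a : ZMod (2*r)) + (p:ZMod (2*r)) = ((a + p : ℤ) : ZMod (2*r)) by push_cast; ring,
       zmod_cast_eq_iff r]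
    constructor <;> intro h <;> (rcases h with ⟨c,hc⟩; exact ⟨-c, by linarith⟩)
  simp only [hcond]
  split_ifs with h
  · rw [t_zpow_mul_congr r hr q (zmod_val_dvd r b)]
  · rfl

lemma Emat_apply_cast (r : ℕ) (hr : 2 ≤ r) [NeZero r] (p q a b : ℤ) :
    Emat r p q ((a : ZMod (2*r))) ((b : ZMod (2*r))) =
      (if (2*(r:ℤ)) ∣ (b - a - p) then tconst r ^ (-(p*q)) * tconst r ^ (2*q*b) else 0)
    + (if (2*(r:ℤ)) ∣ (b - a + p) then tconst r ^ (-(p*q)) * tconst r ^ (-(2*q*b)) else 0)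
    - (if (2*(r:ℤ)) ∣ (b + a - p) then tconst r ^ (-(p*q)) * tconst r ^ (2*q*b) else 0)
    - (if (2*(r:ℤ)) ∣ (b + a + p) then tconst r ^ (-(p*q)) * tconst r ^ (-(2*q*b)) else 0) := by
  haveI : NeZero (2*r) := ⟨by omega⟩
  have h1 := Dmat_apply_cast r hr p q a b
  have h2 := Dmat_apply_cast r hr (-p) (-q) a b
  have h3 := Dmat_apply_cast r hr p q (-a) b
  have h4 := Dmat_apply_cast r hr (-p) (-q) (-a) b
  simp only [Emat, Fmat, Matrix.of_apply, Matrix.add_apply]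
  rw [show -((a:ℤ):ZMod (2*r)) = ((-a : ℤ) : ZMod (2*r)) by push_cast; ring]
  rw [h1, h2, h3, h4]
  rw [show -(-p * -q) = -(p*q) by ring, show 2*(-q)*b = -(2*q*b) by ring,
      show b - a - -p = b - a + p by ring, show b - -a - p = b + a - p by ring,
      show b - -a - -p = b + a + p by ring]
  ring

lemma not_both (r : ℕ) (hr : 2 ≤ r) {k : ℤ} (hk1 : 1 ≤ k) (hk2 : k ≤ (r:ℤ) - 1) {j : ℤ}
    (h1 : (2*(r:ℤ)) ∣ (j - k)) (h2 : (2*(r:ℤ)) ∣ (j + k)) : False := by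
  have h3 : (2*(r:ℤ)) ∣ 2*k := by
    have := dvd_sub h2 h1
    have e : j + k - (j - k) = 2*k := by ring
    rwa [e] at this
  have := Int.le_of_dvd (by omega) h3
  omega

lemma eps_cast (r : ℕ) (hr : 2 ≤ r) {a : ℤ} (ha1 : 1 ≤ a) (ha2 : a ≤ (r:ℤ)-1) (j : ℤ) :
    ((eps r a j : ℤ) : ℂ)
      = (if (2*(r:ℤ)) ∣ (j - a) then (1:ℂ) else 0)
        - (if (2*(r:ℤ)) ∣ (j + a) then (1:ℂ) else 0) := by
  by_cases h1 : (2*(r:ℤ)) ∣ (j - a)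
  · have h2 : ¬ (2*(r:ℤ)) ∣ (j + a) := fun hh => not_both r hr ha1 ha2 h1 hh
    simp [eps, h1, h2]
  · by_cases h2 : (2*(r:ℤ)) ∣ (j + a) <;> simp [eps, h1, h2]

lemma Cmat_eq_Emat (r : ℕ) (hr : 2 ≤ r) [NeZero r] (p q : ℤ) (k m : Fin (r-1)) :
    Cmat r p q k m
      = Emat r p q ((((k:ℤ)+1 : ℤ)) : ZMod (2*r)) ((((m:ℤ)+1 : ℤ)) : ZMod (2*r)) := by
  rw [Emat_apply_cast r hr]
  have hk1 : (1:ℤ) ≤ (k:ℤ) + 1 := by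
    have h0 : (0:ℤ) ≤ (k:ℤ) := by exact_mod_cast Nat.zero_le (k : ℕ)
    linarith
  have hk2 : (k:ℤ) + 1 ≤ (r:ℤ) - 1 := by
    have := k.isLt
    omega
  simp only [Cmat, Matrix.of_apply]
  rw [eps_cast r hr hk1 hk2 ((((m:ℤ)+1)) - p), eps_cast r hr hk1 hk2 ((((m:ℤ)+1)) + p)]
  simp only [show ((2*(r:ℤ)) ∣ ((m:ℤ)+1 - p - ((k:ℤ)+1))) ↔ ((2*(r:ℤ)) ∣ ((m:ℤ)+1 - ((k:ℤ)+1) - p))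
      from by rw [show (m:ℤ)+1 - p - ((k:ℤ)+1) = (m:ℤ)+1 - ((k:ℤ)+1) - p from by ring],
    show ((2*(r:ℤ)) ∣ ((m:ℤ)+1 - p + ((k:ℤ)+1))) ↔ ((2*(r:ℤ)) ∣ ((m:ℤ)+1 + ((k:ℤ)+1) - p))
      from by rw [show (m:ℤ)+1 - p + ((k:ℤ)+1) = (m:ℤ)+1 + ((k:ℤ)+1) - p from by ring],
    show ((2*(r:ℤ)) ∣ ((m:ℤ)+1 + p - ((k:ℤ)+1))) ↔ ((2*(r:ℤ)) ∣ ((m:ℤ)+1 - ((k:ℤ)+1) + p))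
      from by rw [show (m:ℤ)+1 + p - ((k:ℤ)+1) = (m:ℤ)+1 - ((k:ℤ)+1) + p from by ring],
    show ((2*(r:ℤ)) ∣ ((m:ℤ)+1 + p + ((k:ℤ)+1))) ↔ ((2*(r:ℤ)) ∣ ((m:ℤ)+1 + ((k:ℤ)+1) + p))
      from by rw [show (m:ℤ)+1 + p + ((k:ℤ)+1) = (m:ℤ)+1 + ((k:ℤ)+1) + p from by ring]]
  ring_nf
  simp only [mul_ite, mul_one, mul_zero]
  ring

lemma zmod_any (r : ℕ) [NeZero r] (x : ZMod (2*r)) : x = (((x.val : ℤ)) : ZMod (2*r)) := by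
  push_cast
  simp [ZMod.natCast_val, ZMod.cast_id]

lemma Fmat_apply_cast (r : ℕ) (hr : 2 ≤ r) [NeZero r] (p q a b : ℤ) :
    Fmat r p q ((a : ZMod (2*r))) ((b : ZMod (2*r))) =
      (if (2*(r:ℤ)) ∣ (b - a - p) then tconst r ^ (-(p*q)) * tconst r ^ (2*q*b) else 0)
    + (if (2*(r:ℤ)) ∣ (b - a + p) then tconst r ^ (-(p*q)) * tconst r ^ (-(2*q*b)) else 0) := by
  simp only [Fmat, Matrix.add_apply, Dmat_apply_cast r hr]
  rw [show -(-p * -q) = -(p*q) by ring, show 2*(-q)*b = -(2*q*b) by ring,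
      show b - a - -p = b - a + p by ring]

lemma Fmat_neg (r : ℕ) (hr : 2 ≤ r) [NeZero r] (p q : ℤ) (x y : ZMod (2*r)) :
    Fmat r p q (-x) y = Fmat r p q x (-y) := by
  haveI : NeZero (2*r) := ⟨by omega⟩
  rw [zmod_any r x, zmod_any r y]
  rw [show -(((x.val:ℤ)) : ZMod (2*r)) = (((-(x.val:ℤ)) : ℤ) : ZMod (2*r)) by push_cast; ring,
      show -(((y.val:ℤ)) : ZMod (2*r)) = (((-(y.val:ℤ)) : ℤ) : ZMod (2*r)) by push_cast; ring]
  rw [Fmat_apply_cast r hr, Fmat_apply_cast r hr]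
  rw [show (2*q*(-(y.val:ℤ))) = -(2*q*(y.val:ℤ)) by ring, neg_neg]
  rw [show ((y.val:ℤ) - -(x.val:ℤ) - p) = ((y.val:ℤ) + (x.val:ℤ) - p) by ring,
      show ((y.val:ℤ) - -(x.val:ℤ) + p) = ((y.val:ℤ) + (x.val:ℤ) + p) by ring]
  simp only [show ((2*(r:ℤ)) ∣ (-(y.val:ℤ) - (x.val:ℤ) - p))
        ↔ ((2*(r:ℤ)) ∣ ((y.val:ℤ) + (x.val:ℤ) + p)) from by
      rw [show (-(y.val:ℤ) - (x.val:ℤ) - p) = -((y.val:ℤ) + (x.val:ℤ) + p) by ring, dvd_neg],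
    show ((2*(r:ℤ)) ∣ (-(y.val:ℤ) - (x.val:ℤ) + p))
        ↔ ((2*(r:ℤ)) ∣ ((y.val:ℤ) + (x.val:ℤ) - p)) from by
      rw [show (-(y.val:ℤ) - (x.val:ℤ) + p) = -((y.val:ℤ) + (x.val:ℤ) - p) by ring, dvd_neg]]
  ring

noncomputable def Jmat (r : ℕ) : Matrix (ZMod (2*r)) (ZMod (2*r)) ℂ :=
  Matrix.of fun x y => if y = -x then 1 else 0

lemma Jmul_apply (r : ℕ) [NeZero r] (A : Matrix (ZMod (2*r)) (ZMod (2*r)) ℂ)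
    (x y : ZMod (2*r)) : (Jmat r * A) x y = A (-x) y := by
  haveI : NeZero (2*r) := ⟨Nat.mul_ne_zero (by norm_num) (NeZero.ne r)⟩
  rw [Matrix.mul_apply]
  simp only [Jmat, Matrix.of_apply, ite_mul, one_mul, zero_mul]
  rw [Finset.sum_eq_single (-x)]
  · simp
  · intro b _ hb
    rw [if_neg hb]
  · intro h
    exact absurd (Finset.mem_univ _) h

lemma mulJ_apply (r : ℕ) [NeZero r] (A : Matrix (ZMod (2*r)) (ZMod (2*r)) ℂ)
    (x y : ZMod (2*r)) : (A * Jmat r) x y = A x (-y) := by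
  haveI : NeZero (2*r) := ⟨Nat.mul_ne_zero (by norm_num) (NeZero.ne r)⟩
  rw [Matrix.mul_apply]
  simp only [Jmat, Matrix.of_apply, mul_ite, mul_one, mul_zero]
  rw [Finset.sum_eq_single (-y)]
  · rw [if_pos (by rw [neg_neg])]
  · intro b _ hb
    rw [if_neg (fun hh => hb (by rw [hh, neg_neg]))]
  · intro h
    exact absurd (Finset.mem_univ _) h

lemma JF_comm (r : ℕ) (hr : 2 ≤ r) [NeZero r] (p q : ℤ) :
    Jmat r * Fmat r p q = Fmat r p q * Jmat r := by
  ext x y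
  rw [Jmul_apply, mulJ_apply, Fmat_neg r hr]

lemma JJ (r : ℕ) [NeZero r] : Jmat r * Jmat r = (1 : Matrix (ZMod (2*r)) (ZMod (2*r)) ℂ) := by
  ext x y
  rw [Jmul_apply]
  simp only [Jmat, Matrix.of_apply, Matrix.one_apply]
  by_cases h : x = y
  · rw [if_pos (by rw [neg_neg, h]), if_pos h]
  · rw [if_neg (fun hh => h (by rw [neg_neg] at hh; exact hh.symm)), if_neg h]

lemma Emat_eq (r : ℕ) [NeZero r] (p q : ℤ) :
    Emat r p q = Fmat r p q - Jmat r * Fmat r p q := by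
  ext x y
  rw [Matrix.sub_apply, Jmul_apply]
  rfl

lemma Fmat_mul (r : ℕ) (hr : 2 ≤ r) [NeZero r] (p q p' q' : ℤ) :
    Fmat r p q * Fmat r p' q' =
      tconst r ^ (p * q' - p' * q) • Fmat r (p + p') (q + q')
      + tconst r ^ (p' * q - p * q') • Fmat r (p - p') (q - q') := by
  simp only [Fmat, Matrix.add_mul, Matrix.mul_add, Dmul r hr, smul_add]
  rw [show -p * -q' - -p' * -q = p * q' - p' * q by ring,
      show p * -q' - -p' * q = p' * q - p * q' by ring,
      show -p * q' - p' * -q = p' * q - p * q' by ring,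
      show (-p) + (-p') = -(p + p') by ring, show (-q) + (-q') = -(q + q') by ring,
      show p + (-p') = p - p' by ring, show q + (-q') = q - q' by ring,
      show (-p) + p' = -(p - p') by ring, show (-q) + q' = -(q - q') by ring]
  abel

lemma Emat_mul (r : ℕ) (hr : 2 ≤ r) [NeZero r] (p q p' q' : ℤ) :
    Emat r p q * Emat r p' q' =
      (2:ℂ) • (tconst r ^ (p * q' - p' * q) • Emat r (p + p') (q + q')
      + tconst r ^ (p' * q - p * q') • Emat r (p - p') (q - q')) := by
  rw [Emat_eq, Emat_eq, Matrix.sub_mul, Matrix.mul_sub, Matrix.mul_sub]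
  rw [show Fmat r p q * (Jmat r * Fmat r p' q') = Jmat r * (Fmat r p q * Fmat r p' q') by
        rw [← Matrix.mul_assoc, ← JF_comm r hr, Matrix.mul_assoc],
      show Jmat r * Fmat r p q * (Jmat r * Fmat r p' q')
          = Fmat r p q * Fmat r p' q' by
        rw [Matrix.mul_assoc, ← Matrix.mul_assoc (Fmat r p q), ← JF_comm r hr,
          Matrix.mul_assoc, ← Matrix.mul_assoc, JJ r, Matrix.one_mul],
      Matrix.mul_assoc]
  rw [Fmat_mul r hr]
  ext x y
  simp only [Emat_eq, Matrix.mul_add, Matrix.mul_smul, Matrix.sub_apply, Matrix.add_apply,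
    Matrix.smul_apply, Jmul_apply, smul_eq_mul]
  ring

lemma zmod_sum_split (r : ℕ) (hr : 2 ≤ r) [NeZero r] (f : ZMod (2*r) → ℂ)
    (heven : ∀ y, f (-y) = f y) (h0 : f 0 = 0) (hmid : f (((r : ℕ)) : ZMod (2*r)) = 0) :
    ∑ y : ZMod (2*r), f y = 2 * ∑ m : Fin (r-1), f ((((m:ℤ)+1 : ℤ)) : ZMod (2*r)) := by
  haveI : NeZero (2*r) := ⟨by omega⟩
  have h1 : ∑ y : ZMod (2*r), f y = ∑ i ∈ Finset.range (2*r), f ((i : ℕ) : ZMod (2*r)) := by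
    apply Finset.sum_nbij' (fun y => y.val) (fun i => ((i : ℕ) : ZMod (2*r)))
    · intro a _
      exact Finset.mem_range.mpr (ZMod.val_lt a)
    · intro a _
      exact Finset.mem_univ _
    · intro a _
      exact ZMod.natCast_zmod_val a
    · intro a ha
      exact ZMod.val_cast_of_lt (Finset.mem_range.mp ha)
    · intro a _
      rw [ZMod.natCast_zmod_val]
  rw [h1, Finset.range_eq_Ico,
    ← Finset.sum_Ico_consecutive _ (Nat.zero_le r) (by omega : r ≤ 2*r),
    ← Finset.range_eq_Ico]
  have hrr : r = (r-1) + 1 := by omega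
  have hA : ∑ i ∈ Finset.range r, f ((i : ℕ) : ZMod (2*r))
      = ∑ i ∈ Finset.range (r-1), f (((i+1 : ℕ)) : ZMod (2*r)) := by
    rw [show Finset.range r = Finset.range ((r-1)+1) from congrArg _ hrr,
      Finset.sum_range_succ']
    rw [Nat.cast_zero, h0, add_zero]
  have hB : ∑ i ∈ Finset.Ico r (2*r), f ((i : ℕ) : ZMod (2*r))
      = ∑ i ∈ Finset.range (r-1), f (((i+1 : ℕ)) : ZMod (2*r)) := by
    rw [Finset.sum_Ico_eq_sum_range, show 2*r - r = r by omega,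
      show Finset.range r = Finset.range ((r-1)+1) from congrArg _ hrr,
      Finset.sum_range_succ', Nat.add_zero, hmid, add_zero]
    rw [← Finset.sum_range_reflect (fun j => f (((j+1 : ℕ)) : ZMod (2*r))) (r-1)]
    apply Finset.sum_congr rfl
    intro i hi
    have hi' := Finset.mem_range.mp hi
    have key : ((r + (i+1) : ℕ) : ZMod (2*r)) = -((((r-1) - 1 - i + 1 : ℕ)) : ZMod (2*r)) := by
      rw [eq_neg_iff_add_eq_zero, ← Nat.cast_add,
        show (r + (i+1)) + ((r-1) - 1 - i + 1) = 2*r by omega, ZMod.natCast_self]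
    rw [key, heven]
  rw [hA, hB, ← two_mul]
  congr 1
  rw [← Fin.sum_univ_eq_sum_range (fun i => f (((i+1 : ℕ)) : ZMod (2*r))) (r-1)]
  apply Finset.sum_congr rfl
  intro m _
  congr 1
  push_cast
  ring

lemma Emat_neg_left (r : ℕ) (p q : ℤ) (x y : ZMod (2*r)) :
    Emat r p q (-x) y = - Emat r p q x y := by
  simp only [Emat, Matrix.of_apply, neg_neg]
  ring

lemma Emat_neg_right (r : ℕ) (hr : 2 ≤ r) [NeZero r] (p q : ℤ) (x y : ZMod (2*r)) :
    Emat r p q x (-y) = - Emat r p q x y := by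
  simp only [Emat, Matrix.of_apply]
  rw [show Fmat r p q x (-y) = Fmat r p q (-x) y from (Fmat_neg r hr p q x y).symm,
      show Fmat r p q (-x) (-y) = Fmat r p q x y from by
        rw [Fmat_neg r hr p q x (-y), neg_neg]]
  ring

lemma Emat_zero_right (r : ℕ) (hr : 2 ≤ r) [NeZero r] (p q : ℤ) (x : ZMod (2*r)) :
    Emat r p q x 0 = 0 := by
  have := Emat_neg_right r hr p q x 0
  rw [neg_zero] at this
  linear_combination (1/2 : ℂ) * this

lemma Emat_mid_right (r : ℕ) (hr : 2 ≤ r) [NeZero r] (p q : ℤ) (x : ZMod (2*r)) :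
    Emat r p q x (((r:ℕ)) : ZMod (2*r)) = 0 := by
  haveI : NeZero (2*r) := ⟨by omega⟩
  have hneg : -(((r:ℕ)) : ZMod (2*r)) = (((r:ℕ)) : ZMod (2*r)) := by
    rw [neg_eq_iff_add_eq_zero, ← Nat.cast_add, show r + r = 2*r by ring, ZMod.natCast_self]
  have := Emat_neg_right r hr p q x ((r:ℕ) : ZMod (2*r))
  rw [hneg] at this
  linear_combination (1/2 : ℂ) * this

lemma Cmat_mul (r : ℕ) (hr : 2 ≤ r) (p q p' q' : ℤ) :
    Cmat r p q * Cmat r p' q' =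
      tconst r ^ (p * q' - p' * q) • Cmat r (p + p') (q + q')
      + tconst r ^ (p' * q - p * q') • Cmat r (p - p') (q - q') := by
  haveI : NeZero r := ⟨by omega⟩
  haveI : NeZero (2*r) := ⟨by omega⟩
  ext k j
  rw [Matrix.mul_apply, Matrix.add_apply, Matrix.smul_apply, Matrix.smul_apply, smul_eq_mul,
    smul_eq_mul, Cmat_eq_Emat r hr, Cmat_eq_Emat r hr]
  set x : ZMod (2*r) := ((((k:ℤ)+1 : ℤ)) : ZMod (2*r)) with hx
  set z : ZMod (2*r) := ((((j:ℤ)+1 : ℤ)) : ZMod (2*r)) with hz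
  have hsum : ∑ m : Fin (r-1),
      Cmat r p q k m * Cmat r p' q' m j
      = ∑ m : Fin (r-1), (fun y => Emat r p q x y * Emat r p' q' y z)
          (((((m:ℤ)+1 : ℤ)) : ZMod (2*r))) := by
    apply Finset.sum_congr rfl
    intro m _
    rw [Cmat_eq_Emat r hr, Cmat_eq_Emat r hr]
  rw [hsum]
  have hkey := zmod_sum_split r hr (fun y => Emat r p q x y * Emat r p' q' y z)
    (fun y => by
      rw [Emat_neg_right r hr, Emat_neg_left, neg_mul_neg])
    (by rw [Emat_zero_right r hr, zero_mul])
    (by rw [Emat_mid_right r hr, zero_mul])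
  have hEE : ∑ y : ZMod (2*r), Emat r p q x y * Emat r p' q' y z
      = (Emat r p q * Emat r p' q') x z := by
    rw [Matrix.mul_apply]
  rw [hEE, Emat_mul r hr] at hkey
  simp only [Matrix.smul_apply, Matrix.add_apply, smul_eq_mul] at hkey
  apply mul_left_cancel₀ (two_ne_zero (α := ℂ))
  rw [← hkey]

lemma Cmat_neg (r : ℕ) (p q : ℤ) : Cmat r (-p) (-q) = Cmat r p q := by
  ext k m
  simp only [Cmat, Matrix.of_apply]
  rw [show -(-p * -q) = -(p*q) by ring,
      show 2*(-q)*((m:ℤ)+1) = -(2*q*((m:ℤ)+1)) by ring, neg_neg,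
      show (m:ℤ)+1 - -p = (m:ℤ)+1 + p by ring,
      show (m:ℤ)+1 + -p = (m:ℤ)+1 - p by ring]
  ring

lemma Cmat_zero (r : ℕ) (hr : 2 ≤ r) :
    Cmat r 0 0 = (2 : Matrix (Fin (r-1)) (Fin (r-1)) ℂ) := by
  have h2 : (2 : Matrix (Fin (r-1)) (Fin (r-1)) ℂ) = 1 + 1 := by norm_num
  rw [h2]
  ext k m
  simp only [Cmat, Matrix.of_apply, Matrix.add_apply, Matrix.one_apply]
  rw [show -((0:ℤ)*0) = 0 by ring, show 2*(0:ℤ)*((m:ℤ)+1) = 0 by ring, neg_zero, zpow_zero,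
      sub_zero, add_zero]
  have hdvd : ((2*(r:ℤ)) ∣ ((m:ℤ)+1) - ((k:ℤ)+1)) ↔ (k = m) := by
    constructor
    · intro h
      have hm := m.isLt
      have hk := k.isLt
      by_cases hne : ((m:ℤ)+1) - ((k:ℤ)+1) = 0
      · have : (k:ℕ) = (m:ℕ) := by omega
        exact Fin.ext this
      · exfalso
        have hle := Int.le_of_dvd (abs_pos.mpr hne) ((dvd_abs _ _).mpr h)
        have : |((m:ℤ)+1) - ((k:ℤ)+1)| < 2*(r:ℤ) := by
          rw [abs_lt]
          omega
        omega
    · intro h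
      rw [h, sub_self]
      exact dvd_zero _
  have hdvd2 : ¬ ((2*(r:ℤ)) ∣ ((m:ℤ)+1) + ((k:ℤ)+1)) := by
    intro h
    have hm := m.isLt
    have hk := k.isLt
    have hle := Int.le_of_dvd (by omega) h
    omega
  simp only [eps, hdvd, hdvd2, if_false]
  by_cases h : k = m
  · rw [if_pos h, if_pos h]
    norm_num
  · rw [if_neg h, if_neg h]
    norm_num

/-- `C(np, nq) = T_n(C(p,q))`, where `T_n` is the normalized Chebyshev polynomial of the
first kind. -/
theorem Cmat_mul_chebT (r : ℕ) (hr : 2 ≤ r) (n : ℕ) (p q : ℤ) :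
    Cmat r ((n : ℤ) * p) ((n : ℤ) * q) = Polynomial.aeval (Cmat r p q) (chebT n) := by
  induction n using Nat.twoStepInduction with
  | zero =>
    rw [show ((0:ℕ):ℤ) * p = 0 by push_cast; ring, show ((0:ℕ):ℤ) * q = 0 by push_cast; ring,
      show chebT 0 = 2 from rfl, map_ofNat]
    exact Cmat_zero r hr
  | one =>
    rw [show ((1:ℕ):ℤ) * p = p by push_cast; ring, show ((1:ℕ):ℤ) * q = q by push_cast; ring,
      show chebT 1 = Polynomial.X from rfl, Polynomial.aeval_X]
  | more n ih1 ih2 =>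
    rw [show chebT (n+2) = Polynomial.X * chebT (n + 1) - chebT n from rfl,
      map_sub, _root_.map_mul, Polynomial.aeval_X, ← ih1, ← ih2]
    have key := Cmat_mul r hr p q (((n+1:ℕ):ℤ) * p) (((n+1:ℕ):ℤ) * q)
    rw [show p * ((((n+1:ℕ)):ℤ) * q) - ((((n+1:ℕ)):ℤ) * p) * q = 0 by ring,
      show ((((n+1:ℕ)):ℤ) * p) * q - p * ((((n+1:ℕ)):ℤ) * q) = 0 by ring,
      zpow_zero, one_smul, one_smul,
      show p + (((n+1:ℕ)):ℤ) * p = (((n+2:ℕ)):ℤ) * p by push_cast; ring,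
      show q + (((n+1:ℕ)):ℤ) * q = (((n+2:ℕ)):ℤ) * q by push_cast; ring,
      show p - (((n+1:ℕ)):ℤ) * p = -(((n:ℕ):ℤ) * p) by push_cast; ring,
      show q - (((n+1:ℕ)):ℤ) * q = -(((n:ℕ):ℤ) * q) by push_cast; ring,
      Cmat_neg] at key
    rw [key]
    abel
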